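/- Sync events enforce ordering: let σ be a trace containing two composite sync(ℓ) events e1 and e2 (each being acq(ℓ), r(x_ℓ), w(x_ℓ), rel(ℓ) on a dedicated variable x_ℓ) with e1 strictly before e2 in trace order and in different threads. Then every correct reordering ρ of σ containing e2 also contains e1 entirely; moreover, for any events e1', e2' ∈ ρ with e1' thread-ordered before (or equal to) the release of e1 and the acquire of e2 thread-ordered before (or equal to) e2', we have e1' strictly before e2' in ρ. -/

import Mathlib

inductive Op : Type
  | read (x : ℕ)
  | write (x : ℕ)
  | acquire (l : ℕ)
  | release (l : ℕ)
  deriving DecidableEq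

structure Event where
  tid : ℕ
  op : Op
  deriving DecidableEq

/-- A concurrent trace: a finite sequence of events, each with a thread id and an operation.
Events are identified with their positions `Fin N`; trace order is the order on `Fin N`. -/
structure Trace where
  N : ℕ
  tid : Fin N → ℕ
  op : Fin N → Op

/-- Happens-before: the smallest (reflexive, transitive) order containing thread order and
ordering each release of a lock before every later (in trace order) acquire of that lock. -/
inductive HB (σ : Trace) : Fin σ.N → Fin σ.N → Prop
  | refl (i : Fin σ.N) : HB σ i i
  | thread {i j : Fin σ.N} : i < j → σ.tid i = σ.tid j → HB σ i j
  | relAcq {i j : Fin σ.N} (l : ℕ) : i < j → σ.op i = Op.release l → σ.op j = Op.acquire l →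
      HB σ i j
  | trans {i j k : Fin σ.N} : HB σ i j → HB σ j k → HB σ i k

def accessesVar (σ : Trace) (e : Fin σ.N) (x : ℕ) : Prop :=
  σ.op e = Op.read x ∨ σ.op e = Op.write x

/-- Number of acquire events of lock `l` among the first `n` events. -/
def countAcq (σ : Trace) (l : ℕ) (n : ℕ) : ℕ :=
  (Finset.univ.filter (fun i : Fin σ.N => (i : ℕ) < n ∧ σ.op i = Op.acquire l)).card

/-- Number of release events of lock `l` among the first `n` events. -/
def countRel (σ : Trace) (l : ℕ) (n : ℕ) : ℕ :=
  (Finset.univ.filter (fun i : Fin σ.N => (i : ℕ) < n ∧ σ.op i = Op.release l)).card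

/-- Release `j` matches acquire `i` on lock `l`. -/
def Matched (σ : Trace) (l : ℕ) (i j : Fin σ.N) : Prop :=
  σ.op i = Op.acquire l ∧ σ.op j = Op.release l ∧ i < j ∧
    countAcq σ l ((i : ℕ) + 1) = countRel σ l ((j : ℕ) + 1)

/-- Well-formedness: per lock, acquires and releases alternate (acquire first), and
matching acquire/release pairs are performed by the same thread. -/
def WellFormed (σ : Trace) : Prop :=
  (∀ l n, countRel σ l n ≤ countAcq σ l n ∧ countAcq σ l n ≤ countRel σ l n + 1) ∧
  (∀ (l : ℕ) (i j : Fin σ.N), Matched σ l i j → σ.tid i = σ.tid j)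

/-- `ρ` (given as the list `l` of σ-events in their new order) is a correct reordering of `σ`:
no duplicates, downward closed under thread order, thread order preserved, and every read
observes the same last write as in `σ`. -/
def CorrectReordering (σ : Trace) (l : List (Fin σ.N)) : Prop :=
  l.Nodup ∧
  (∀ i ∈ l, ∀ j : Fin σ.N, j < i → σ.tid j = σ.tid i → j ∈ l) ∧
  (∀ i ∈ l, ∀ j ∈ l, σ.tid i = σ.tid j → i < j → l.idxOf i < l.idxOf j) ∧
  (∀ i ∈ l, ∀ x : ℕ, σ.op i = Op.read x →
    ((∃ w : Fin σ.N, w ∈ l ∧ σ.op w = Op.write x ∧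
        l.idxOf w < l.idxOf i ∧
        (∀ w' ∈ l, σ.op w' = Op.write x → l.idxOf w' < l.idxOf i →
          l.idxOf w' ≤ l.idxOf w) ∧
        w < i ∧ (∀ w' : Fin σ.N, σ.op w' = Op.write x → w' < i → w' ≤ w)) ∨
     ((∀ w ∈ l, σ.op w = Op.write x → ¬ l.idxOf w < l.idxOf i) ∧
      (∀ w : Fin σ.N, σ.op w = Op.write x → ¬ w < i))))

/-- `ρ` is sync-preserving w.r.t. `σ`: acquires of the same lock appear in the same relative
order in `ρ` as in `σ`. -/
def SyncPreserving (σ : Trace) (l : List (Fin σ.N)) : Prop :=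
  ∀ (lk : ℕ), ∀ i ∈ l, ∀ j ∈ l, σ.op i = Op.acquire lk → σ.op j = Op.acquire lk →
    i < j → l.idxOf i < l.idxOf j

/-- Event `e` is enabled after executing the reordering `l`: `e` is not in `l` but all its
thread-order predecessors are. -/
def Enabled (σ : Trace) (l : List (Fin σ.N)) (e : Fin σ.N) : Prop :=
  e ∉ l ∧ ∀ j : Fin σ.N, j < e → σ.tid j = σ.tid e → j ∈ l

/-- The trace obtained by restricting `σ` to the reordering `l`. -/
def subTrace (σ : Trace) (l : List (Fin σ.N)) : Trace :=
  ⟨l.length, fun p => σ.tid (l.get p), fun p => σ.op (l.get p)⟩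


section SyncHelpers

lemma card_split' {N : ℕ} (P : Fin N → Prop) [DecidablePred P] {a b : ℕ} (hab : a ≤ b) :
    (Finset.univ.filter fun i : Fin N => (i : ℕ) < b ∧ P i).card =
      (Finset.univ.filter fun i : Fin N => (i : ℕ) < a ∧ P i).card +
      (Finset.univ.filter fun i : Fin N => a ≤ (i : ℕ) ∧ (i : ℕ) < b ∧ P i).card := by
  have hset : (Finset.univ.filter fun i : Fin N => (i : ℕ) < b ∧ P i) =
      (Finset.univ.filter fun i : Fin N => (i : ℕ) < a ∧ P i) ∪
      (Finset.univ.filter fun i : Fin N => a ≤ (i : ℕ) ∧ (i : ℕ) < b ∧ P i) := by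
    ext i
    simp only [Finset.mem_filter, Finset.mem_union, Finset.mem_univ, true_and]
    constructor
    · rintro ⟨h1, h2⟩
      rcases lt_or_ge (i : ℕ) a with h | h
      · exact Or.inl ⟨h, h2⟩
      · exact Or.inr ⟨h, h1, h2⟩
    · rintro (⟨h1, h2⟩ | ⟨h1, h2, h3⟩)
      · exact ⟨lt_of_lt_of_le h1 hab, h2⟩
      · exact ⟨h2, h3⟩
  rw [hset, Finset.card_union_of_disjoint]
  rw [Finset.disjoint_left]
  intro i hi hi'
  simp only [Finset.mem_filter, Finset.mem_univ, true_and] at hi hi'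
  omega

lemma card_between_succ' {N : ℕ} (P : Fin N → Prop) [DecidablePred P] (i : Fin N) :
    (Finset.univ.filter fun j : Fin N => (i : ℕ) ≤ (j : ℕ) ∧ (j : ℕ) < (i : ℕ) + 1 ∧ P j).card
      = if P i then 1 else 0 := by
  split_ifs with hP
  · rw [Finset.card_eq_one]
    refine ⟨i, ?_⟩
    ext j
    simp only [Finset.mem_filter, Finset.mem_univ, true_and, Finset.mem_singleton]
    constructor
    · rintro ⟨h1, h2, _⟩; exact Fin.ext (by omega)
    · rintro rfl; exact ⟨le_refl _, by omega, hP⟩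
  · rw [Finset.card_eq_zero]
    ext j
    simp only [Finset.mem_filter, Finset.mem_univ, true_and, Finset.notMem_empty, iff_false]
    rintro ⟨h1, h2, h3⟩
    exact hP (by rwa [show i = j from Fin.ext (by omega)])

lemma card_between_zero' {N : ℕ} (P : Fin N → Prop) [DecidablePred P] {a b : ℕ}
    (h : ∀ j : Fin N, a ≤ (j : ℕ) → (j : ℕ) < b → ¬ P j) :
    (Finset.univ.filter fun j : Fin N => a ≤ (j : ℕ) ∧ (j : ℕ) < b ∧ P j).card = 0 := by
  rw [Finset.card_eq_zero]
  ext j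
  simp only [Finset.mem_filter, Finset.mem_univ, true_and, Finset.notMem_empty, iff_false]
  rintro ⟨h1, h2, h3⟩
  exact h j h1 h2 h3

lemma countAcq_succ (τ : Trace) (lk : ℕ) (i : Fin τ.N) :
    countAcq τ lk ((i : ℕ) + 1) =
      countAcq τ lk i + if τ.op i = Op.acquire lk then 1 else 0 := by
  unfold countAcq
  rw [card_split' (fun j : Fin τ.N => τ.op j = Op.acquire lk) (Nat.le_succ (i : ℕ)),
    card_between_succ']

lemma countRel_succ (τ : Trace) (lk : ℕ) (i : Fin τ.N) :
    countRel τ lk ((i : ℕ) + 1) =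
      countRel τ lk i + if τ.op i = Op.release lk then 1 else 0 := by
  unfold countRel
  rw [card_split' (fun j : Fin τ.N => τ.op j = Op.release lk) (Nat.le_succ (i : ℕ)),
    card_between_succ']

lemma countRel_nogap (τ : Trace) (lk : ℕ) {a b : ℕ} (hab : a ≤ b)
    (h : ∀ j : Fin τ.N, a ≤ (j : ℕ) → (j : ℕ) < b → τ.op j ≠ Op.release lk) :
    countRel τ lk b = countRel τ lk a := by
  unfold countRel
  rw [card_split' (fun j : Fin τ.N => τ.op j = Op.release lk) hab,
    card_between_zero' _ h, add_zero]

lemma countAcq_mono (τ : Trace) (lk : ℕ) {a b : ℕ} (hab : a ≤ b) :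
    countAcq τ lk a ≤ countAcq τ lk b := by
  unfold countAcq
  rw [card_split' (fun j : Fin τ.N => τ.op j = Op.acquire lk) hab]
  omega

lemma acq_count_eq (τ : Trace) (lk : ℕ)
    (hwf : ∀ l n, countRel τ l n ≤ countAcq τ l n ∧ countAcq τ l n ≤ countRel τ l n + 1)
    (i : Fin τ.N) (hi : τ.op i = Op.acquire lk) :
    countAcq τ lk ((i : ℕ) + 1) = countRel τ lk ((i : ℕ) + 1) + 1 := by
  have h1 := countAcq_succ τ lk i
  have h2 := countRel_succ τ lk i
  rw [if_pos hi] at h1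
  rw [if_neg (by rw [hi]; intro h; cases h)] at h2
  have h3 := hwf lk (i : ℕ)
  have h4 := hwf lk ((i : ℕ) + 1)
  omega

lemma rel_between (τ : Trace) (lk : ℕ)
    (hwf : ∀ l n, countRel τ l n ≤ countAcq τ l n ∧ countAcq τ l n ≤ countRel τ l n + 1)
    {i j : Fin τ.N} (hij : i < j)
    (hi : τ.op i = Op.acquire lk) (hj : τ.op j = Op.acquire lk) :
    ∃ m : Fin τ.N, i < m ∧ m < j ∧ τ.op m = Op.release lk := by
  by_contra hcon
  push_neg at hcon
  have hij' : (i : ℕ) < (j : ℕ) := hij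
  have hnog : countRel τ lk (j : ℕ) = countRel τ lk ((i : ℕ) + 1) := by
    apply countRel_nogap τ lk (by omega)
    intro k hk1 hk2
    exact hcon k (by exact Fin.lt_def.mpr (by omega)) (Fin.lt_def.mpr hk2)
  have h1 := countAcq_succ τ lk j
  rw [if_pos hj] at h1
  have h2 := countRel_succ τ lk j
  rw [if_neg (by rw [hj]; intro h; cases h)] at h2
  have h3 := countAcq_mono τ lk (show (i : ℕ) + 1 ≤ (j : ℕ) by omega)
  have h4 := acq_count_eq τ lk hwf i hi
  have h5 := hwf lk ((j : ℕ) + 1)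
  omega

lemma matched_first (τ : Trace) (lk : ℕ)
    (hwf : ∀ l n, countRel τ l n ≤ countAcq τ l n ∧ countAcq τ l n ≤ countRel τ l n + 1)
    {i m : Fin τ.N} (hi : τ.op i = Op.acquire lk) (hm : τ.op m = Op.release lk)
    (him : i < m) (hfirst : ∀ k : Fin τ.N, i < k → k < m → τ.op k ≠ Op.release lk) :
    Matched τ lk i m := by
  refine ⟨hi, hm, him, ?_⟩
  have h1 := countRel_succ τ lk m
  rw [if_pos hm] at h1
  have h2 : countRel τ lk (m : ℕ) = countRel τ lk ((i : ℕ) + 1) := by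
    apply countRel_nogap τ lk (by have := Fin.lt_def.mp him; omega)
    intro k hk1 hk2
    exact hfirst k (Fin.lt_def.mpr (by omega)) (Fin.lt_def.mpr hk2)
  have h3 := acq_count_eq τ lk hwf i hi
  omega

lemma first_rel_matched (τ : Trace) (lk : ℕ) (hwf : WellFormed τ)
    {i j : Fin τ.N} (hij : i < j)
    (hi : τ.op i = Op.acquire lk) (hj : τ.op j = Op.acquire lk) :
    ∃ m : Fin τ.N, i < m ∧ m < j ∧ Matched τ lk i m ∧
      (∀ k : Fin τ.N, i < k → k < m → τ.op k ≠ Op.release lk) := by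
  obtain ⟨m0, hm1, hm2, hm3⟩ := rel_between τ lk hwf.1 hij hi hj
  classical
  set S : Finset (Fin τ.N) :=
    Finset.univ.filter (fun k => i < k ∧ τ.op k = Op.release lk) with hS
  have hm0S : m0 ∈ S := by simp [hS, hm1, hm3]
  have hSne : S.Nonempty := ⟨m0, hm0S⟩
  set m := S.min' hSne with hmdef
  have hmS : m ∈ S := S.min'_mem hSne
  simp only [hS, Finset.mem_filter, Finset.mem_univ, true_and] at hmS
  have hmin : ∀ k ∈ S, m ≤ k := fun k hk => S.min'_le k hk
  have hmj : m < j := lt_of_le_of_lt (hmin m0 hm0S) hm2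
  refine ⟨m, hmS.1, hmj, matched_first τ lk hwf.1 hi hmS.2 hmS.1 ?_, ?_⟩ <;>
  · intro k hk1 hk2 hk3
    have : m ≤ k := hmin k (by simp [hS, hk1, hk3])
    exact absurd hk2 (not_lt.mpr this)

end SyncHelpers

/-- Sync events enforce ordering: if `σ` contains two composite `sync(ℓ)`
events `e1 = (a1, r1, w1, rl1)` and `e2 = (a2, r2, w2, rl2)` on a dedicated variable `xl`, in
different threads, with `e1` strictly before `e2` in trace order, and the read of `e2` observes
the write of `e1`, then every correct, lock-well-formed reordering containing the read of `e2`
contains `e1` entirely; moreover any event thread-ordered up to the release of `e1` occurs in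
the reordering strictly before any event thread-ordered from the acquire of `e2` on. -/
theorem sync_enforces_ordering (σ : Trace) (lk xl : ℕ)
    (a1 r1 w1 rl1 a2 r2 w2 rl2 : Fin σ.N)
    (ht1 : σ.tid r1 = σ.tid a1) (ht1' : σ.tid w1 = σ.tid a1) (ht1'' : σ.tid rl1 = σ.tid a1)
    (ht2 : σ.tid r2 = σ.tid a2) (ht2' : σ.tid w2 = σ.tid a2) (ht2'' : σ.tid rl2 = σ.tid a2)
    (hc1 : (a1 : ℕ) + 1 = (r1 : ℕ)) (hc2 : (r1 : ℕ) + 1 = (w1 : ℕ))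
    (hc3 : (w1 : ℕ) + 1 = (rl1 : ℕ))
    (hc4 : (a2 : ℕ) + 1 = (r2 : ℕ)) (hc5 : (r2 : ℕ) + 1 = (w2 : ℕ))
    (hc6 : (w2 : ℕ) + 1 = (rl2 : ℕ))
    (ho1 : σ.op a1 = Op.acquire lk) (ho2 : σ.op r1 = Op.read xl)
    (ho3 : σ.op w1 = Op.write xl) (ho4 : σ.op rl1 = Op.release lk)
    (ho5 : σ.op a2 = Op.acquire lk) (ho6 : σ.op r2 = Op.read xl)
    (ho7 : σ.op w2 = Op.write xl) (ho8 : σ.op rl2 = Op.release lk)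
    (htids : σ.tid a1 ≠ σ.tid a2)
    (hbefore : rl1 < a2)
    (hobs : ∀ w' : Fin σ.N, σ.op w' = Op.write xl → w' < r2 → w' ≤ w1)
    (l : List (Fin σ.N))
    (hcr : CorrectReordering σ l)
    (hwf : WellFormed (subTrace σ l))
    (hin : r2 ∈ l) :
    (a1 ∈ l ∧ r1 ∈ l ∧ w1 ∈ l ∧ rl1 ∈ l) ∧
    (∀ e1' ∈ l, ∀ e2' ∈ l, σ.tid e1' = σ.tid a1 → e1' ≤ rl1 →
      σ.tid e2' = σ.tid a2 → a2 ≤ e2' → l.idxOf e1' < l.idxOf e2') := by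
  classical
  obtain ⟨hnd, hdc, hop, hread⟩ := hcr
  have hb : (rl1 : ℕ) < (a2 : ℕ) := hbefore
  have hlen : ∀ e ∈ l, l.idxOf e < l.length := fun e he => List.idxOf_lt_length_iff.mpr he
  have hget : ∀ (e : Fin σ.N) (he : e ∈ l), l.get ⟨l.idxOf e, hlen e he⟩ = e := by
    intro e he
    simp [List.get_eq_getElem, List.getElem_idxOf]
  have hordrev : ∀ e ∈ l, ∀ f ∈ l, σ.tid e = σ.tid f →
      l.idxOf e < l.idxOf f → e < f := by
    intro e he f hf htid hlt
    rcases lt_trichotomy e f with h | h | h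
    · exact h
    · exact absurd hlt (by rw [h]; omega)
    · exact absurd (hop f hf e he htid.symm h) (by omega)
  have hw1r2 : w1 < r2 := Fin.lt_def.mpr (by omega)
  have hw1 : w1 ∈ l ∧ l.idxOf w1 < l.idxOf r2 := by
    rcases hread r2 hin xl ho6 with ⟨w, hwl, hwop, hwidx, _, hwlt, hwmax⟩ | ⟨_, hnone⟩
    · have h1 : w1 ≤ w := hwmax w1 ho3 hw1r2
      have h2 : w ≤ w1 := hobs w hwop hwlt
      have heq : w = w1 := le_antisymm h2 h1
      subst heq
      exact ⟨hwl, hwidx⟩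
    · exact absurd hw1r2 (hnone w1 ho3)
  have ha1 : a1 ∈ l := hdc w1 hw1.1 a1 (Fin.lt_def.mpr (by omega)) ht1'.symm
  have hr1 : r1 ∈ l := hdc w1 hw1.1 r1 (Fin.lt_def.mpr (by omega)) (ht1.trans ht1'.symm)
  have ha2 : a2 ∈ l := hdc r2 hin a2 (Fin.lt_def.mpr (by omega)) ht2.symm
  have hia1w1 : l.idxOf a1 < l.idxOf w1 :=
    hop a1 ha1 w1 hw1.1 ht1'.symm (Fin.lt_def.mpr (by omega))
  have hia2r2 : l.idxOf a2 < l.idxOf r2 :=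
    hop a2 ha2 r2 hin ht2.symm (Fin.lt_def.mpr (by omega))
  have hopa1 : (subTrace σ l).op ⟨l.idxOf a1, hlen a1 ha1⟩ = Op.acquire lk := by
    show σ.op (l.get ⟨l.idxOf a1, hlen a1 ha1⟩) = _
    rw [hget a1 ha1]; exact ho1
  have hopa2 : (subTrace σ l).op ⟨l.idxOf a2, hlen a2 ha2⟩ = Op.acquire lk := by
    show σ.op (l.get ⟨l.idxOf a2, hlen a2 ha2⟩) = _
    rw [hget a2 ha2]; exact ho5
  rcases lt_trichotomy (l.idxOf a1) (l.idxOf a2) with hcase | hcase | hcase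
  · -- main case: a1 appears before a2 in ρ
    obtain ⟨m, hm1, hm2, hmatch, hfirst⟩ := first_rel_matched (subTrace σ l) lk hwf
      (show (⟨l.idxOf a1, hlen a1 ha1⟩ : Fin (subTrace σ l).N) <
          ⟨l.idxOf a2, hlen a2 ha2⟩ from Fin.mk_lt_mk.mpr hcase) hopa1 hopa2
    have hmlt : (m : ℕ) < l.length := m.isLt
    set rlx : Fin σ.N := l.get ⟨(m : ℕ), hmlt⟩ with hrlxdef
    have hrlxmem : rlx ∈ l := List.get_mem l _
    have hrlxidx : l.idxOf rlx = (m : ℕ) := List.get_idxOf hnd _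
    have hrlxop : σ.op rlx = Op.release lk := hmatch.2.1
    have htidrlx : σ.tid a1 = σ.tid rlx := by
      have := hwf.2 lk _ _ hmatch
      show σ.tid a1 = σ.tid (l.get _)
      rw [← hget a1 ha1]
      exact this
    have ha1rlx : a1 < rlx := hordrev a1 ha1 rlx hrlxmem htidrlx
      (by rw [hrlxidx]; exact Fin.mk_lt_mk.mp hm1)
    have hge : (rl1 : ℕ) ≤ (rlx : ℕ) := by
      by_contra hlt
      push_neg at hlt
      have ha1v : (a1 : ℕ) < (rlx : ℕ) := ha1rlx
      have hval : (rlx : ℕ) = (r1 : ℕ) ∨ (rlx : ℕ) = (w1 : ℕ) := by omega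
      rcases hval with h | h
      · rw [show rlx = r1 from Fin.ext h, ho2] at hrlxop; cases hrlxop
      · rw [show rlx = w1 from Fin.ext h, ho3] at hrlxop; cases hrlxop
    have hrlxeq : rlx = rl1 := by
      by_contra hne
      have hlt : rl1 < rlx := Fin.lt_def.mpr
        (lt_of_le_of_ne hge (fun h => hne (Fin.ext h.symm)))
      have hrl1mem : rl1 ∈ l := hdc rlx hrlxmem rl1 hlt (ht1''.trans htidrlx)
      have hidx1 : l.idxOf a1 < l.idxOf rl1 :=
        hop a1 ha1 rl1 hrl1mem ht1''.symm (Fin.lt_def.mpr (by omega))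
      have hidx2 : l.idxOf rl1 < l.idxOf rlx :=
        hop rl1 hrl1mem rlx hrlxmem (ht1''.trans htidrlx) hlt
      refine hfirst ⟨l.idxOf rl1, hlen rl1 hrl1mem⟩
        (Fin.mk_lt_mk.mpr hidx1)
        (Fin.lt_def.mpr (by rw [hrlxidx] at hidx2; exact hidx2)) ?_
      show σ.op (l.get ⟨l.idxOf rl1, hlen rl1 hrl1mem⟩) = _
      rw [hget rl1 hrl1mem]; exact ho4
    have hrl1mem : rl1 ∈ l := hrlxeq ▸ hrlxmem
    have hrl1idx : l.idxOf rl1 = (m : ℕ) := hrlxeq ▸ hrlxidx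
    have hkey : l.idxOf rl1 < l.idxOf a2 := by
      rw [hrl1idx]; exact Fin.mk_lt_mk.mp hm2
    refine ⟨⟨ha1, hr1, hw1.1, hrl1mem⟩, ?_⟩
    intro e1' he1 e2' he2 htid1 hle1 htid2 hle2
    have h1 : l.idxOf e1' ≤ l.idxOf rl1 := by
      rcases eq_or_lt_of_le hle1 with h | h
      · rw [h]
      · exact le_of_lt (hop e1' he1 rl1 hrl1mem (htid1.trans ht1''.symm) h)
    have h2 : l.idxOf a2 ≤ l.idxOf e2' := by
      rcases eq_or_lt_of_le hle2 with h | h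
      · rw [h]
      · exact le_of_lt (hop a2 ha2 e2' he2 htid2.symm h)
    omega
  · exact absurd ((List.idxOf_inj ha1 (y := a2)).mp hcase ▸ htids) (fun h => h rfl)
  · -- impossible case: a2 before a1 in ρ
    exfalso
    obtain ⟨m, hm1, hm2, hmatch, _⟩ := first_rel_matched (subTrace σ l) lk hwf
      (show (⟨l.idxOf a2, hlen a2 ha2⟩ : Fin (subTrace σ l).N) <
          ⟨l.idxOf a1, hlen a1 ha1⟩ from Fin.mk_lt_mk.mpr hcase) hopa2 hopa1
    have hmlt : (m : ℕ) < l.length := m.isLt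
    set rly : Fin σ.N := l.get ⟨(m : ℕ), hmlt⟩ with hrlydef
    have hrlymem : rly ∈ l := List.get_mem l _
    have hrlyidx : l.idxOf rly = (m : ℕ) := List.get_idxOf hnd _
    have hrlyop : σ.op rly = Op.release lk := hmatch.2.1
    have htidrly : σ.tid a2 = σ.tid rly := by
      have := hwf.2 lk _ _ hmatch
      show σ.tid a2 = σ.tid (l.get _)
      rw [← hget a2 ha2]
      exact this
    have ha2rly : a2 < rly := hordrev a2 ha2 rly hrlymem htidrly
      (by rw [hrlyidx]; exact Fin.mk_lt_mk.mp hm1)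
    have hge : (rl2 : ℕ) ≤ (rly : ℕ) := by
      by_contra hlt
      push_neg at hlt
      have ha2v : (a2 : ℕ) < (rly : ℕ) := ha2rly
      have hval : (rly : ℕ) = (r2 : ℕ) ∨ (rly : ℕ) = (w2 : ℕ) := by omega
      rcases hval with h | h
      · rw [show rly = r2 from Fin.ext h, ho6] at hrlyop; cases hrlyop
      · rw [show rly = w2 from Fin.ext h, ho7] at hrlyop; cases hrlyop
    have hr2rly : r2 < rly := Fin.lt_def.mpr (by omega)
    have hidx : l.idxOf r2 < l.idxOf rly :=
      hop r2 hin rly hrlymem (ht2.trans htidrly) hr2rly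
    have hma1 : (m : ℕ) < l.idxOf a1 := Fin.mk_lt_mk.mp hm2
    omega
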